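/- arXiv:2206.09379 — 2 statements merged into one kernel-verified Lean document; each statement's English description precedes it below -/
import Mathlib

section
/- Let τ, γ, λ > 0, U ∈ ℝ^{p×n}, V ∈ ℝ^{p×m}, and define Ψ(W) := (τ/2)‖U − VW‖² + (γ/2)‖W‖² for W ∈ ℝ^{m×n}. If W* is a global minimizer of Ψ(W) + λ‖W‖_{0,2} over ℝ^{m×n}, then for every β ∈ (0, 1/(τ‖V‖₂² + γ)) the inclusion W* ∈ Prox_{βλ‖·‖_{0,2}}(W* − β∇Ψ(W*)) holds. -/
set_option autoImplicit false

open Matrix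

/-- Squared Frobenius norm of a matrix. -/
noncomputable def frobSq {m n : ℕ} (W : Matrix (Fin m) (Fin n) ℝ) : ℝ :=
  ∑ i, ∑ j, (W i j) ^ 2

/-- Frobenius norm of a matrix. -/
noncomputable def frobNorm {m n : ℕ} (W : Matrix (Fin m) (Fin n) ℝ) : ℝ :=
  Real.sqrt (frobSq W)

open Classical in
/-- `‖W‖_{0,2}`: the number of nonzero rows of `W`, as a real number. -/
noncomputable def norm02 {m n : ℕ} (W : Matrix (Fin m) (Fin n) ℝ) : ℝ :=
  ((Finset.univ.filter fun s : Fin m => W s ≠ 0).card : ℝ)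

/-- The proximal operator (as a set of global minimizers):
`Prox_β G (H) = argmin_W { G(W) + (1/(2β))‖W − H‖² }`. -/
def ProxSet {m n : ℕ} (β : ℝ) (G : Matrix (Fin m) (Fin n) ℝ → ℝ)
    (H : Matrix (Fin m) (Fin n) ℝ) : Set (Matrix (Fin m) (Fin n) ℝ) :=
  {W | ∀ Z : Matrix (Fin m) (Fin n) ℝ,
    G W + (1 / (2 * β)) * frobSq (W - H) ≤ G Z + (1 / (2 * β)) * frobSq (Z - H)}

/-- The objective `Ψ(W) = (τ/2)‖U − VW‖² + (γ/2)‖W‖²`. -/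
noncomputable def Psi {p m n : ℕ} (τ γ : ℝ) (U : Matrix (Fin p) (Fin n) ℝ)
    (V : Matrix (Fin p) (Fin m) ℝ) (W : Matrix (Fin m) (Fin n) ℝ) : ℝ :=
  (τ / 2) * frobSq (U - V * W) + (γ / 2) * frobSq W

/-- The gradient of `Ψ`, namely `∇Ψ(W) = τ Vᵀ(VW − U) + γ W`. -/
noncomputable def gradPsi {p m n : ℕ} (τ γ : ℝ) (U : Matrix (Fin p) (Fin n) ℝ)
    (V : Matrix (Fin p) (Fin m) ℝ) (W : Matrix (Fin m) (Fin n) ℝ) :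
    Matrix (Fin m) (Fin n) ℝ :=
  τ • (Vᵀ * (V * W - U)) + γ • W

/-- The spectral norm `‖V‖₂` of a matrix (largest singular value): the operator norm
of the induced linear map between Euclidean spaces. -/
noncomputable def specNorm {p m : ℕ} (V : Matrix (Fin p) (Fin m) ℝ) : ℝ :=
  ‖LinearMap.toContinuousLinearMap (Matrix.toEuclideanLin V)‖

/-- Inner product (Frobenius) on matrices. -/
noncomputable def inn {m n : ℕ} (A B : Matrix (Fin m) (Fin n) ℝ) : ℝ :=
  ∑ i, ∑ j, A i j * B i j

lemma frobSq_nonneg {m n : ℕ} (A : Matrix (Fin m) (Fin n) ℝ) : 0 ≤ frobSq A :=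
  Finset.sum_nonneg fun _ _ => Finset.sum_nonneg fun _ _ => sq_nonneg _

lemma frobSq_sub {m n : ℕ} (A B : Matrix (Fin m) (Fin n) ℝ) :
    frobSq (A - B) = frobSq A - 2 * inn A B + frobSq B := by
  simp only [frobSq, inn, Matrix.sub_apply, sub_sq, Finset.sum_add_distrib,
    Finset.sum_sub_distrib, Finset.mul_sum]
  ring

lemma frobSq_add {m n : ℕ} (A B : Matrix (Fin m) (Fin n) ℝ) :
    frobSq (A + B) = frobSq A + 2 * inn A B + frobSq B := by
  simp only [frobSq, inn, Matrix.add_apply, add_sq, Finset.sum_add_distrib, Finset.mul_sum]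
  ring

lemma inn_smul_left {m n : ℕ} (c : ℝ) (A B : Matrix (Fin m) (Fin n) ℝ) :
    inn (c • A) B = c * inn A B := by
  simp only [inn, Matrix.smul_apply, smul_eq_mul, Finset.mul_sum, mul_assoc]

lemma frobSq_smul {m n : ℕ} (c : ℝ) (A : Matrix (Fin m) (Fin n) ℝ) :
    frobSq (c • A) = c ^ 2 * frobSq A := by
  simp only [frobSq, Matrix.smul_apply, smul_eq_mul, mul_pow, Finset.mul_sum]

lemma inn_add_left {m n : ℕ} (A B C : Matrix (Fin m) (Fin n) ℝ) :
    inn (A + B) C = inn A C + inn B C := by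
  simp only [inn, Matrix.add_apply, add_mul, Finset.sum_add_distrib]

lemma inn_neg_left {m n : ℕ} (A B : Matrix (Fin m) (Fin n) ℝ) :
    inn (-A) B = -inn A B := by
  simp only [inn, Matrix.neg_apply, neg_mul, Finset.sum_neg_distrib]

lemma inn_comm {m n : ℕ} (A B : Matrix (Fin m) (Fin n) ℝ) : inn A B = inn B A := by
  simp only [inn, mul_comm]

lemma inn_eq_trace {m n : ℕ} (A B : Matrix (Fin m) (Fin n) ℝ) :
    inn A B = Matrix.trace (Aᵀ * B) := by
  simp only [inn, Matrix.trace, Matrix.diag, Matrix.mul_apply, Matrix.transpose_apply]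
  rw [Finset.sum_comm]

lemma inn_transpose_mul {p m n : ℕ} (V : Matrix (Fin p) (Fin m) ℝ)
    (A : Matrix (Fin p) (Fin n) ℝ) (D : Matrix (Fin m) (Fin n) ℝ) :
    inn (Vᵀ * A) D = inn A (V * D) := by
  rw [inn_eq_trace, inn_eq_trace, Matrix.transpose_mul, Matrix.transpose_transpose,
    Matrix.mul_assoc]

lemma specNorm_nonneg {p m : ℕ} (V : Matrix (Fin p) (Fin m) ℝ) : 0 ≤ specNorm V :=
  norm_nonneg _

lemma frobSq_mul_le {p m n : ℕ} (V : Matrix (Fin p) (Fin m) ℝ)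
    (D : Matrix (Fin m) (Fin n) ℝ) :
    frobSq (V * D) ≤ specNorm V ^ 2 * frobSq D := by
  have key : ∀ j : Fin n, ∑ i, ((V * D) i j) ^ 2 ≤ specNorm V ^ 2 * ∑ i, (D i j) ^ 2 := by
    intro j
    set L := LinearMap.toContinuousLinearMap (Matrix.toEuclideanLin V) with hL
    set x : EuclideanSpace ℝ (Fin m) := (WithLp.equiv 2 _).symm (fun i => D i j) with hx
    have hxn : ‖x‖ ^ 2 = ∑ i, (D i j) ^ 2 := by
      rw [EuclideanSpace.norm_eq, Real.sq_sqrt (by positivity)]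
      simp [hx, Real.norm_eq_abs, sq_abs]
    have hLx : L x = (WithLp.equiv 2 (Fin p → ℝ)).symm (fun i => (V * D) i j) := by
      rw [hL, hx]
      simp only [LinearMap.coe_toContinuousLinearMap', WithLp.equiv_symm_apply,
        Matrix.toEuclideanLin_apply_piLp_toLp]
      congr 1
    have hLxn : ‖L x‖ ^ 2 = ∑ i, ((V * D) i j) ^ 2 := by
      rw [hLx, EuclideanSpace.norm_eq, Real.sq_sqrt (by positivity)]
      simp [Real.norm_eq_abs, sq_abs]
    have h1 : ‖L x‖ ≤ ‖L‖ * ‖x‖ := L.le_opNorm x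
    have h2 : ‖L x‖ ^ 2 ≤ (‖L‖ * ‖x‖) ^ 2 := by
      apply sq_le_sq' _ h1
      nlinarith [norm_nonneg (L x), mul_nonneg (norm_nonneg L) (norm_nonneg x)]
    calc ∑ i, ((V * D) i j) ^ 2 = ‖L x‖ ^ 2 := hLxn.symm
      _ ≤ (‖L‖ * ‖x‖) ^ 2 := h2
      _ = specNorm V ^ 2 * ‖x‖ ^ 2 := by rw [specNorm, ← hL]; ring
      _ = specNorm V ^ 2 * ∑ i, (D i j) ^ 2 := by rw [hxn]
  calc frobSq (V * D) = ∑ j, ∑ i, ((V * D) i j) ^ 2 := Finset.sum_comm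
    _ ≤ ∑ j, specNorm V ^ 2 * ∑ i, (D i j) ^ 2 := Finset.sum_le_sum fun j _ => key j
    _ = specNorm V ^ 2 * frobSq D := by rw [← Finset.mul_sum, frobSq, Finset.sum_comm]

lemma psi_expand {p m n : ℕ} (τ γ : ℝ) (U : Matrix (Fin p) (Fin n) ℝ)
    (V : Matrix (Fin p) (Fin m) ℝ) (W D : Matrix (Fin m) (Fin n) ℝ) :
    Psi τ γ U V (W + D) = Psi τ γ U V W + inn (gradPsi τ γ U V W) D
      + (τ / 2) * frobSq (V * D) + (γ / 2) * frobSq D := by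
  have hU : U - V * (W + D) = (U - V * W) - V * D := by rw [Matrix.mul_add]; abel
  have hneg : inn (V * W - U) (V * D) = -inn (U - V * W) (V * D) := by
    rw [show V * W - U = -(U - V * W) by abel, inn_neg_left]
  rw [Psi, Psi, hU, frobSq_sub, frobSq_add, gradPsi, inn_add_left, inn_smul_left,
    inn_smul_left, inn_transpose_mul, hneg]
  ring

/-- a global minimizer `W*` of `Ψ(W) + λ‖W‖_{0,2}` is a P-stationary
point for every `β ∈ (0, 1/(τ‖V‖₂² + γ))`. -/
theorem global_minimizer_is_pStationary
    (p m n : ℕ) (τ γ lam : ℝ) (hτ : 0 < τ) (hγ : 0 < γ) (hlam : 0 < lam)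
    (U : Matrix (Fin p) (Fin n) ℝ) (V : Matrix (Fin p) (Fin m) ℝ)
    (Wstar : Matrix (Fin m) (Fin n) ℝ)
    (hglobal : ∀ W : Matrix (Fin m) (Fin n) ℝ,
      Psi τ γ U V Wstar + lam * norm02 Wstar ≤ Psi τ γ U V W + lam * norm02 W) :
    ∀ β : ℝ, 0 < β → β < 1 / (τ * specNorm V ^ 2 + γ) →
      Wstar ∈ ProxSet β (fun W => lam * norm02 W)
        (Wstar - β • gradPsi τ γ U V Wstar) := by
  intro β hβ0 hβ2 Z
  set G := gradPsi τ γ U V Wstar with hG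
  set D := Z - Wstar with hD
  have hZeq : Wstar + D = Z := by rw [hD]; abel
  have hexp := psi_expand τ γ U V Wstar D
  rw [hZeq] at hexp
  have hg := hglobal Z
  have step1 : lam * norm02 Wstar ≤ lam * norm02 Z + inn G D
      + ((τ / 2) * frobSq (V * D) + (γ / 2) * frobSq D) := by
    rw [hexp, ← hG] at hg; linarith
  have hs2 : frobSq (V * D) ≤ specNorm V ^ 2 * frobSq D := frobSq_mul_le V D
  have hDnn := frobSq_nonneg D
  have hsnn := specNorm_nonneg V
  have hcpos : 0 < τ * specNorm V ^ 2 + γ := by positivity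
  have hβc : τ * specNorm V ^ 2 + γ ≤ 1 / β := by
    rw [le_div_iff₀ hβ0]
    have := (lt_div_iff₀ hcpos).mp hβ2
    linarith
  have quad : (τ / 2) * frobSq (V * D) + (γ / 2) * frobSq D
      ≤ (1 / (2 * β)) * frobSq D := by
    have h1 : (τ / 2) * frobSq (V * D) ≤ (τ / 2) * (specNorm V ^ 2 * frobSq D) :=
      mul_le_mul_of_nonneg_left hs2 (by linarith)
    have h2 : (τ * specNorm V ^ 2 + γ) / 2 * frobSq D ≤ (1 / β) / 2 * frobSq D :=
      mul_le_mul_of_nonneg_right (by linarith) hDnn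
    have h3 : 1 / β / 2 * frobSq D = 1 / (2 * β) * frobSq D := by ring
    have h4 : τ / 2 * (specNorm V ^ 2 * frobSq D) + γ / 2 * frobSq D
        = (τ * specNorm V ^ 2 + γ) / 2 * frobSq D := by ring
    linarith [h1, h2, h3, h4]
  have e1 : Wstar - (Wstar - β • G) = β • G := by abel
  have e2 : Z - (Wstar - β • G) = D + β • G := by rw [hD]; abel
  show lam * norm02 Wstar + (1 / (2 * β)) * frobSq (Wstar - (Wstar - β • G))
      ≤ lam * norm02 Z + (1 / (2 * β)) * frobSq (Z - (Wstar - β • G))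
  rw [e1, e2, frobSq_add]
  have innD : inn D (β • G) = β * inn G D := by rw [inn_comm, inn_smul_left]
  rw [innD]
  have hc : (1 / (2 * β)) * (2 * (β * inn G D)) = inn G D := by
    field_simp
  have expand : (1 / (2 * β)) * (frobSq D + 2 * (β * inn G D) + frobSq (β • G))
      = (1 / (2 * β)) * frobSq D + inn G D + (1 / (2 * β)) * frobSq (β • G) := by
    rw [mul_add, mul_add, hc]
  rw [expand]
  linarith
end

section
/- Let β > 0, λ > 0, Θ ∈ ℝ^{m×n}, and suppose W⁺ ∈ ℝ^{m×n} satisfies the fixed-point inclusion W⁺ ∈ Prox_{βλ‖·‖_{2,0}}(W⁺ − βΘ). Then for every W ∈ ℝ^{m×n}: ⟨Θ, W⁺ − W⟩ + λ(‖W⁺‖_{2,0} − ‖W‖_{2,0}) ≤ (1/(2β))‖W⁺ − W‖². -/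
set_option autoImplicit false

open Matrix

/-- The Frobenius inner product `⟨A, B⟩ = Σ_{ij} A_{ij} B_{ij}`. -/
noncomputable def frobInner {m n : ℕ} (A B : Matrix (Fin m) (Fin n) ℝ) : ℝ :=
  ∑ i, ∑ j, A i j * B i j

open Classical in
/-- `‖W‖_{2,0}`: the number of nonzero columns of `W`, as a real number. -/
noncomputable def norm20 {m n : ℕ} (W : Matrix (Fin m) (Fin n) ℝ) : ℝ :=
  ((Finset.univ.filter fun j : Fin n => Wᵀ j ≠ 0).card : ℝ)

lemma frobSq_add_smul {m n : ℕ} (A B : Matrix (Fin m) (Fin n) ℝ) (c : ℝ) :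
    frobSq (A + c • B) = frobSq A + (2 * c) * frobInner A B + c ^ 2 * frobSq B := by
  simp only [frobSq, frobInner, Finset.mul_sum]
  rw [← Finset.sum_add_distrib, ← Finset.sum_add_distrib]
  refine Finset.sum_congr rfl fun i _ => ?_
  rw [← Finset.sum_add_distrib, ← Finset.sum_add_distrib]
  refine Finset.sum_congr rfl fun j _ => ?_
  simp only [Matrix.add_apply, Matrix.smul_apply, smul_eq_mul]
  ring

lemma frobSq_neg' {m n : ℕ} (A : Matrix (Fin m) (Fin n) ℝ) :
    frobSq (-A) = frobSq A := by
  simp [frobSq]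

lemma frobInner_neg_right {m n : ℕ} (A B : Matrix (Fin m) (Fin n) ℝ) :
    frobInner A (-B) = -frobInner A B := by
  simp [frobInner, ← Finset.sum_neg_distrib]

lemma frobInner_comm {m n : ℕ} (A B : Matrix (Fin m) (Fin n) ℝ) :
    frobInner A B = frobInner B A := by
  simp [frobInner, mul_comm]

/-- if `W⁺ ∈ Prox_{βλ‖·‖_{2,0}}(W⁺ − βΘ)`, then for every `W`,
`⟨Θ, W⁺ − W⟩ + λ(‖W⁺‖_{2,0} − ‖W‖_{2,0}) ≤ (1/(2β))‖W⁺ − W‖²`. -/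
theorem prox_fixed_point_inequality
    (m n : ℕ) (β lam : ℝ) (hβ : 0 < β) (hlam : 0 < lam)
    (Θ Wplus : Matrix (Fin m) (Fin n) ℝ)
    (hfix : Wplus ∈ ProxSet β (fun Z => lam * norm20 Z) (Wplus - β • Θ)) :
    ∀ W : Matrix (Fin m) (Fin n) ℝ,
      frobInner Θ (Wplus - W) + lam * (norm20 Wplus - norm20 W) ≤
        (1 / (2 * β)) * frobSq (Wplus - W) := by
  intro W
  have h := hfix W
  have e1 : Wplus - (Wplus - β • Θ) = (0 : Matrix (Fin m) (Fin n) ℝ) + β • Θ := by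
    abel
  have e2 : W - (Wplus - β • Θ) = -(Wplus - W) + β • Θ := by abel
  rw [e1, e2, frobSq_add_smul, frobSq_add_smul] at h
  have h0 : frobSq (0 : Matrix (Fin m) (Fin n) ℝ) = 0 := by simp [frobSq]
  have hi0 : frobInner (0 : Matrix (Fin m) (Fin n) ℝ) Θ = 0 := by simp [frobInner]
  rw [h0, hi0, frobSq_neg', frobInner_comm (-(Wplus - W)) Θ, frobInner_neg_right] at h
  simp only at h
  have hb : (1 / (2 * β)) * (2 * β) = 1 := by field_simp
  have hb2 : (0:ℝ) < 1 / (2 * β) := by positivity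
  have key : 1 / (2 * β) * (2 * β * -frobInner Θ (Wplus - W))
      = -frobInner Θ (Wplus - W) := by field_simp
  rw [mul_add, mul_add, mul_add, mul_add, key] at h
  linarith
end
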